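/- For q ∈ (0,1] and x in the domain, ∫₀^x sin(2·am_{2,p}(σ,q)) dσ = (1/q²)·(p/(p-1))·(1 - dn_p(x,q)^{p-1}). -/

import Mathlib

open Real MeasureTheory Set intervalIntegral Filter
open scoped ENNReal Topology

noncomputable section

/-- Incomplete p-elliptic integral of the first kind, type 1. -/
def F1 (p q x : ℝ) : ℝ :=
  ∫ θ in (0:ℝ)..x, |Real.cos θ| ^ (1 - 2/p) / Real.sqrt (1 - q^2 * Real.sin θ ^ 2)

/-- Complete p-elliptic integral of the first kind, type 1. -/
def K1 (p q : ℝ) : ℝ := F1 p q (π/2)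

/-- Incomplete p-elliptic integral of the second kind, type 1. -/
def E1 (p q x : ℝ) : ℝ :=
  ∫ θ in (0:ℝ)..x, Real.sqrt (1 - q^2 * Real.sin θ ^ 2) * |Real.cos θ| ^ (1 - 2/p)

/-- Complete p-elliptic integral of the second kind, type 1. -/
def E1c (p q : ℝ) : ℝ := E1 p q (π/2)

/-- Incomplete p-elliptic integral of the first kind, type 2. -/
def F2 (p q x : ℝ) : ℝ :=
  ∫ θ in (0:ℝ)..x, (1 - q^2 * Real.sin θ ^ 2) ^ (-(1/p))

/-- Complete p-elliptic integral of the first kind, type 2. -/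
def K2 (p q : ℝ) : ℝ := F2 p q (π/2)

open Classical in
/-- Domain of the amplitude parametrization: restricted to `(-π/2, π/2)` when `q = 1` and `p ≤ 2`. -/
def amDom (p q : ℝ) : Set ℝ := if q = 1 ∧ p ≤ 2 then Ioo (-(π/2)) (π/2) else univ

/-- `g` is the inverse of `f`, with `f` regarded as a bijection from `S` onto `ℝ`. -/
def IsInverseOn (f g : ℝ → ℝ) (S : Set ℝ) : Prop :=
  (∀ y ∈ S, g (f y) = y) ∧ ∀ x : ℝ, g x ∈ S ∧ f (g x) = x

/-! ### Auxiliary lemmas -/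

lemma aux_cos_lip (a b : ℝ) : |Real.cos a - Real.cos b| ≤ |a - b| := by
  rw [Real.cos_sub_cos]
  calc |-2 * Real.sin ((a+b)/2) * Real.sin ((a-b)/2)|
      = 2 * |Real.sin ((a+b)/2)| * |Real.sin ((a-b)/2)| := by
        rw [abs_mul, abs_mul]; norm_num
    _ ≤ 2 * 1 * |(a-b)/2| := by
        have h1 := Real.abs_sin_le_one ((a+b)/2)
        have h2 : |Real.sin ((a-b)/2)| ≤ |(a-b)/2| := Real.abs_sin_le_abs
        have h3 := abs_nonneg (Real.sin ((a-b)/2))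
        have h4 := abs_nonneg (Real.sin ((a+b)/2))
        nlinarith
    _ = |a - b| := by rw [abs_div, abs_two]; ring

lemma aux_countable_cos : {θ : ℝ | Real.cos θ = 0}.Countable := by
  have h : {θ : ℝ | Real.cos θ = 0} = Set.range (fun k : ℤ => ((2 * (k:ℝ) + 1) * π / 2)) := by
    ext θ
    simp only [mem_setOf_eq, Real.cos_eq_zero_iff, Set.mem_range]
    constructor
    · rintro ⟨k, hk⟩; exact ⟨k, hk.symm⟩
    · rintro ⟨k, hk⟩; exact ⟨k, hk.symm⟩
  rw [h]
  exact Set.countable_range _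

lemma aux_affine_int {r : ℝ} (hr1 : -1 < r) (c d : ℝ) (hc : c ≠ 0) (a b : ℝ) :
    IntervalIntegrable (fun x : ℝ => (c * (d - x)) ^ r) volume a b := by
  have h2 : IntervalIntegrable (fun x : ℝ => (c * x) ^ r) volume ((c*(d-a))/c) ((c*(d-b))/c) :=
    (intervalIntegrable_rpow' hr1).comp_mul_left (c := c)
  rw [mul_div_cancel_left₀ _ hc, mul_div_cancel_left₀ _ hc] at h2
  have h3 := h2.comp_sub_left d
  simpa [sub_sub_cancel] using h3

lemma aux_periodic_int {f : ℝ → ℝ} (hper : Function.Periodic f π)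
    (h0π : IntervalIntegrable f volume 0 π) (a b : ℝ) :
    IntervalIntegrable f volume a b := by
  have hπ : (0:ℝ) < π := Real.pi_pos
  have key : ∀ k : ℤ, IntervalIntegrable f volume ((k:ℝ) * π) ((k:ℝ) * π + π) := by
    intro k
    have h5 := h0π.comp_sub_right ((k:ℝ) * π)
    have h6 : (fun x => f (x - (k:ℝ) * π)) = f := funext fun x => hper.sub_int_mul_eq k
    rw [h6] at h5
    simpa [add_comm] using h5
  have key2 : ∀ n : ℕ, IntervalIntegrable f volume (-((n:ℝ) * π)) ((n:ℝ) * π) := by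
    intro n
    induction n with
    | zero => simp [IntervalIntegrable]
    | succ m ih =>
      have hr := key (m : ℤ)
      have hl := key (-(m+1) : ℤ)
      have e2 : ((-(m+1) : ℤ) : ℝ) * π + π = -((m:ℝ) * π) := by push_cast; ring
      have e1 : ((-(m+1) : ℤ) : ℝ) * π = -((m:ℝ) * π + π) := by push_cast; ring
      have e3 : (((m:ℤ)) : ℝ) * π = (m:ℝ) * π := by push_cast; ring
      rw [e2, e1] at hl
      rw [e3] at hr
      have hall := (hl.trans ih).trans hr
      push_cast
      rw [show ((m:ℝ) + 1) * π = (m:ℝ) * π + π from by ring]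
      exact hall
  obtain ⟨n, hn⟩ := exists_nat_ge ((max |a| |b|) / π)
  have hnm : max |a| |b| ≤ (n:ℝ) * π := by
    rw [div_le_iff₀ hπ] at hn
    linarith
  have ha : |a| ≤ (n:ℝ) * π := le_trans (le_max_left _ _) hnm
  have hb : |b| ≤ (n:ℝ) * π := le_trans (le_max_right _ _) hnm
  apply (key2 n).mono_set'
  have hle : -((n:ℝ) * π) ≤ (n:ℝ) * π := by
    have : (0:ℝ) ≤ (n:ℝ) * π := by positivity
    linarith
  rw [Set.uIoc_of_le hle]
  rw [Set.uIoc]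
  apply Set.Ioc_subset_Ioc
  · exact le_min (by linarith [(abs_le.1 ha).1]) (by linarith [(abs_le.1 hb).1])
  · exact max_le (by linarith [(abs_le.1 ha).2]) (by linarith [(abs_le.1 hb).2])

lemma aux_badInt (p : ℝ) (hp : 2 < p) (a b : ℝ) :
    IntervalIntegrable (fun θ => |Real.cos θ| ^ (-(2/p))) volume a b := by
  have hπ : (0:ℝ) < π := Real.pi_pos
  have hp0 : (0:ℝ) < p := by linarith
  have hrneg : -(2/p) < 0 := by
    have : (0:ℝ) < 2/p := by positivity
    linarith
  have hr1 : (-1:ℝ) < -(2/p) := by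
    have : 2/p < 1 := (div_lt_one hp0).2 (by linarith)
    linarith
  have hg_meas : Measurable fun θ : ℝ => |Real.cos θ| ^ (-(2/p)) :=
    Real.continuous_cos.abs.measurable.pow measurable_const
  have hA : IntervalIntegrable (fun θ => |Real.cos θ| ^ (-(2/p))) volume 0 (π/2) := by
    have hBint : IntervalIntegrable (fun x : ℝ => ((2/π) * (π/2 - x)) ^ (-(2/p))) volume 0 (π/2) :=
      aux_affine_int hr1 (2/π) (π/2) (by positivity) 0 (π/2)
    apply hBint.mono_fun' (hg_meas.aestronglyMeasurable.restrict)
    rw [Set.uIoc_of_le (by positivity : (0:ℝ) ≤ π/2)]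
    refine (ae_restrict_iff' measurableSet_Ioc).2 (Eventually.of_forall fun x hx => ?_)
    have hx1 : 0 < x := hx.1
    have hx2 : x ≤ π/2 := hx.2
    rcases eq_or_lt_of_le hx2 with h|h
    · simp [h, Real.cos_pi_div_two, Real.zero_rpow (ne_of_lt hrneg)]
    · have heq : (2/π) * (π/2 - x) = 1 - 2/π * x := by field_simp
      have hcos : (2/π) * (π/2 - x) ≤ Real.cos x := by
        rw [heq]; exact Real.one_sub_mul_le_cos hx1.le hx2
      have hpos : 0 < (2/π) * (π/2 - x) := by
        apply mul_pos (by positivity); linarith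
      have habs : |Real.cos x| = Real.cos x := abs_of_nonneg (le_trans hpos.le hcos)
      simp only [Real.norm_eq_abs]
      rw [abs_of_nonneg (Real.rpow_nonneg (abs_nonneg _) _), habs]
      exact Real.rpow_le_rpow_of_nonpos hpos hcos hrneg.le
  have hB : IntervalIntegrable (fun θ => |Real.cos θ| ^ (-(2/p))) volume (π/2) π := by
    have h4 := hA.comp_sub_left π
    have h6 : (fun x : ℝ => |Real.cos (π - x)| ^ (-(2/p))) = fun x => |Real.cos x| ^ (-(2/p)) := by
      funext x; rw [Real.cos_pi_sub, abs_neg]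
    rw [h6] at h4
    have e1 : π - 0 = π := by ring
    have e2 : π - π/2 = π/2 := by ring
    rw [e1, e2] at h4
    exact h4.symm
  have h0π : IntervalIntegrable (fun θ => |Real.cos θ| ^ (-(2/p))) volume 0 π := hA.trans hB
  have hper : Function.Periodic (fun θ => |Real.cos θ| ^ (-(2/p))) π := by
    intro x; simp [Real.cos_add_pi, abs_neg]
  exact aux_periodic_int hper h0π a b

lemma aux_base_nonneg (q : ℝ) (hq0 : 0 < q) (hq1 : q ≤ 1) (t : ℝ) :
    0 ≤ 1 - q^2 * Real.sin t ^ 2 := by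
  nlinarith [Real.sin_sq_le_one t, sq_nonneg (Real.sin t)]

lemma aux_base_continuous (q : ℝ) : Continuous fun t : ℝ => 1 - q^2 * Real.sin t ^ 2 :=
  continuous_const.sub (continuous_const.mul (Real.continuous_sin.pow 2))

lemma aux_f_measurable (p q : ℝ) :
    Measurable fun t : ℝ => (1 - q^2 * Real.sin t ^ 2) ^ (-(1/p)) :=
  (aux_base_continuous q).measurable.pow measurable_const

lemma aux_f_contAt (p q t : ℝ) (h : 1 - q^2 * Real.sin t ^ 2 ≠ 0) :
    ContinuousAt (fun t : ℝ => (1 - q^2 * Real.sin t ^ 2) ^ (-(1/p))) t :=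
  ContinuousAt.rpow_const (aux_base_continuous q).continuousAt (Or.inl h)

lemma aux_f_eq_bad (p : ℝ) :
    (fun θ : ℝ => (1 - 1^2 * Real.sin θ ^ 2) ^ (-(1/p)))
      = fun θ => |Real.cos θ| ^ (-(2/p)) := by
  funext θ
  rw [one_pow, one_mul, ← Real.cos_sq', ← sq_abs, ← Real.rpow_natCast |Real.cos θ| 2,
    ← Real.rpow_mul (abs_nonneg _)]
  norm_num
  rw [div_eq_mul_inv, mul_comm]

lemma aux_int_all (p q : ℝ) (hp : 1 < p) (hq0 : 0 < q) (hq1 : q ≤ 1) (hng : ¬(q = 1 ∧ p ≤ 2)) :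
    ∀ a b : ℝ, IntervalIntegrable (fun θ => (1 - q^2 * Real.sin θ ^ 2) ^ (-(1/p))) volume a b := by
  by_cases hq1' : q = 1
  · have hp2 : 2 < p := lt_of_not_ge fun h => hng ⟨hq1', h⟩
    subst hq1'
    rw [aux_f_eq_bad p]
    exact aux_badInt p hp2
  · have hqlt : q < 1 := lt_of_le_of_ne hq1 hq1'
    intro a b
    apply Continuous.intervalIntegrable
    apply Continuous.rpow_const (aux_base_continuous q)
    intro t
    left
    have h1 : Real.sin t ^ 2 ≤ 1 := Real.sin_sq_le_one t
    have : q^2 < 1 := by nlinarith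
    have : 0 < 1 - q^2 * Real.sin t ^ 2 := by nlinarith [sq_nonneg (Real.sin t), sq_nonneg q]
    exact ne_of_gt this

lemma aux_Z_countable (p q : ℝ) (hq0 : 0 < q) (hq1 : q ≤ 1) :
    {t : ℝ | 1 - q^2 * Real.sin t ^ 2 = 0}.Countable := by
  by_cases hq1' : q = 1
  · apply aux_countable_cos.mono
    intro t ht
    simp only [mem_setOf_eq] at *
    subst hq1'
    have h1 : Real.cos t ^ 2 = 0 := by
      have := Real.cos_sq' t
      nlinarith
    exact pow_eq_zero_iff two_ne_zero |>.mp h1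
  · have hqlt : q < 1 := lt_of_le_of_ne hq1 hq1'
    have : {t : ℝ | 1 - q^2 * Real.sin t ^ 2 = 0} = ∅ := by
      ext t
      simp only [mem_setOf_eq, Set.mem_empty_iff_false, iff_false]
      have h1 : Real.sin t ^ 2 ≤ 1 := Real.sin_sq_le_one t
      have : q^2 < 1 := by nlinarith
      have : 0 < 1 - q^2 * Real.sin t ^ 2 := by nlinarith [sq_nonneg (Real.sin t), sq_nonneg q]
      exact ne_of_gt this
    rw [this]
    exact Set.countable_empty

lemma aux_pos (p q : ℝ) (hq0 : 0 < q) (hq1 : q ≤ 1) {a b : ℝ} (hab : a < b)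
    (hint : IntervalIntegrable (fun θ => (1 - q^2 * Real.sin θ ^ 2) ^ (-(1/p))) volume a b) :
    0 < ∫ θ in a..b, (1 - q^2 * Real.sin θ ^ 2) ^ (-(1/p)) := by
  rw [intervalIntegral.integral_of_le hab.le]
  have hnn : ∀ θ : ℝ, 0 ≤ (1 - q^2 * Real.sin θ ^ 2) ^ (-(1/p)) := fun θ =>
    Real.rpow_nonneg (aux_base_nonneg q hq0 hq1 θ) _
  rw [MeasureTheory.setIntegral_pos_iff_support_of_nonneg_ae
    (Filter.Eventually.of_forall hnn)
    ((intervalIntegrable_iff_integrableOn_Ioc_of_le hab.le).1 hint)]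
  have hZ : volume {t : ℝ | 1 - q^2 * Real.sin t ^ 2 = 0} = 0 :=
    (aux_Z_countable p q hq0 hq1).measure_zero volume
  have hsub : Ioc a b \ {t : ℝ | 1 - q^2 * Real.sin t ^ 2 = 0}
      ⊆ Function.support (fun θ => (1 - q^2 * Real.sin θ ^ 2) ^ (-(1/p))) ∩ Ioc a b := by
    rintro t ⟨ht1, ht2⟩
    refine ⟨?_, ht1⟩
    simp only [Function.mem_support]
    have hne : 1 - q^2 * Real.sin t ^ 2 ≠ 0 := by simpa using ht2
    have hbpos : 0 < 1 - q^2 * Real.sin t ^ 2 :=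
      lt_of_le_of_ne (aux_base_nonneg q hq0 hq1 t) (Ne.symm hne)
    exact (Real.rpow_pos_of_pos hbpos _).ne'
  calc (0:ℝ≥0∞) < volume (Ioc a b) := by
        rw [Real.volume_Ioc]; exact ENNReal.ofReal_pos.2 (by linarith)
    _ = volume (Ioc a b \ {t : ℝ | 1 - q^2 * Real.sin t ^ 2 = 0}) := (measure_diff_null hZ).symm
    _ ≤ _ := measure_mono hsub

set_option maxHeartbeats 1600000 in
/-- The key computation: for `y` in the amplitude domain. -/
lemma aux_key (p q : ℝ) (hp : 1 < p) (hq0 : 0 < q) (hq1 : q ≤ 1)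
    (am : ℝ → ℝ) (ham : IsInverseOn (F2 p q) am (amDom p q)) (y : ℝ) (hy : y ∈ amDom p q) :
    (∫ σ in (0:ℝ)..F2 p q y, Real.sin (2 * am σ))
      = 1/q^2 * (p/(p-1)) * (1 - (1 - q^2 * Real.sin y ^ 2) ^ (1/p * (p-1))) := by
  have hπ : (0:ℝ) < π := Real.pi_pos
  have hp0 : (0:ℝ) < p := by linarith
  have hp1 : (0:ℝ) < p - 1 := by linarith
  have he_pos : (0:ℝ) < 1/p * (p-1) := by positivity
  -- membership of 0
  have hS0 : (0:ℝ) ∈ amDom p q := by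
    rw [amDom]
    split_ifs
    · exact ⟨by linarith, by linarith⟩
    · trivial
  have hSord : (amDom p q).OrdConnected := by
    rw [amDom]
    split_ifs
    · exact Set.ordConnected_Ioo
    · exact Set.ordConnected_univ
  -- interval integrability within the domain
  have hIntS : ∀ a b : ℝ, a ∈ amDom p q → b ∈ amDom p q →
      IntervalIntegrable (fun θ => (1 - q^2 * Real.sin θ ^ 2) ^ (-(1/p))) volume a b := by
    by_cases hcase : q = 1 ∧ p ≤ 2
    · intro a b ha hb
      have hSI : amDom p q = Ioo (-(π/2)) (π/2) := by rw [amDom, if_pos hcase]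
      rw [hSI] at ha hb
      apply ContinuousOn.intervalIntegrable
      intro t ht
      have htI : t ∈ Ioo (-(π/2)) (π/2) := Set.ordConnected_Ioo.uIcc_subset ha hb ht
      have hcpos := Real.cos_pos_of_mem_Ioo htI
      have hbpos : 0 < 1 - q^2 * Real.sin t ^ 2 := by
        rw [hcase.1, one_pow, one_mul, ← Real.cos_sq']
        positivity
      exact (aux_f_contAt p q t (ne_of_gt hbpos)).continuousWithinAt
    · intro a b _ _
      exact aux_int_all p q hp hq0 hq1 hcase a b
  -- strict monotonicity of F2 on the domain
  have hmono : StrictMonoOn (F2 p q) (amDom p q) := by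
    intro a ha b hb hab
    have h1 := hIntS 0 a hS0 ha
    have h2 := hIntS a b ha hb
    have hadd : (∫ θ in (0:ℝ)..a, (1 - q^2 * Real.sin θ ^ 2) ^ (-(1/p)))
        + (∫ θ in a..b, (1 - q^2 * Real.sin θ ^ 2) ^ (-(1/p)))
        = ∫ θ in (0:ℝ)..b, (1 - q^2 * Real.sin θ ^ 2) ^ (-(1/p)) :=
      intervalIntegral.integral_add_adjacent_intervals h1 h2
    have hpos := aux_pos p q hq0 hq1 hab h2
    show F2 p q a < F2 p q b
    rw [F2, F2]
    linarith
  -- am is strictly monotone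
  have hamMono : StrictMono am := by
    intro u v huv
    rcases lt_trichotomy (am u) (am v) with h|h|h
    · exact h
    · exfalso
      have : u = v := by rw [← (ham.2 u).2, ← (ham.2 v).2, h]
      exact absurd this (ne_of_lt huv)
    · exfalso
      have := hmono (ham.2 v).1 (ham.2 u).1 h
      rw [(ham.2 u).2, (ham.2 v).2] at this
      exact absurd huv (not_lt.2 this.le)
  have hrange : Set.range am = amDom p q := by
    ext t
    constructor
    · rintro ⟨u, rfl⟩; exact (ham.2 u).1
    · intro ht; exact ⟨F2 p q t, ham.1 t ht⟩
  have hamCont : Continuous am :=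
    (hamMono.isEmbedding_of_ordConnected (by rw [hrange]; exact hSord)).continuous
  have hgcont : Continuous (fun σ => Real.sin (2 * am σ)) :=
    Real.continuous_sin.comp (continuous_const.mul hamCont)
  have hLd : ∀ u : ℝ, HasDerivAt (fun w => ∫ σ in (0:ℝ)..w, Real.sin (2 * am σ))
      (Real.sin (2 * am u)) u := fun u => (hgcont.integral_hasStrictDerivAt 0 u).hasDerivAt
  -- the function whose constancy we prove
  set D : ℝ → ℝ := fun w => (∫ σ in (0:ℝ)..F2 p q w, Real.sin (2 * am σ))
    - 1/q^2 * (p/(p-1)) * (1 - (1 - q^2 * Real.sin w ^ 2) ^ (1/p * (p-1))) with hD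
  have hDd : ∀ t, t ∈ amDom p q → HasDerivAt D 0 t := by
    intro t ht
    rw [hD]
    by_cases hb0 : 1 - q^2 * Real.sin t ^ 2 = 0
    · -- bad point : q = 1, cos t = 0, p > 2
      have hsin1 : Real.sin t ^ 2 ≤ 1 := Real.sin_sq_le_one t
      have hq21 : q^2 = 1 := by nlinarith [sq_nonneg (Real.sin t), sq_nonneg q]
      have hq1' : q = 1 := by
        have h5 : (q - 1) * (q + 1) = 0 := by nlinarith
        rcases mul_eq_zero.1 h5 with h|h
        · linarith
        · linarith
      have hsin2 : Real.sin t ^ 2 = 1 := by nlinarith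
      have hcos : Real.cos t = 0 := by
        have h6 : Real.cos t ^ 2 = 0 := by
          have := Real.sin_sq_add_cos_sq t
          nlinarith
        exact pow_eq_zero_iff two_ne_zero |>.mp h6
      have hng : ¬(q = 1 ∧ p ≤ 2) := by
        rintro ⟨_, hp2⟩
        have hSI : amDom p q = Ioo (-(π/2)) (π/2) := by rw [amDom, if_pos ⟨hq1', hp2⟩]
        rw [hSI] at ht
        exact absurd hcos (ne_of_gt (Real.cos_pos_of_mem_Ioo ht))
      have hSu : amDom p q = univ := by rw [amDom, if_neg hng]
      have hp2 : 2 < p := lt_of_not_ge fun h => hng ⟨hq1', h⟩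
      have hIall := aux_int_all p q hp hq0 hq1 hng
      have hF2cont : Continuous (F2 p q) := by
        show Continuous fun u => ∫ θ in (0:ℝ)..u, (1 - q^2 * Real.sin θ ^ 2) ^ (-(1/p))
        exact intervalIntegral.continuous_primitive hIall 0
      -- part 1 : derivative of the integral term is 0
      have part1 : HasDerivAt (fun u => ∫ σ in (0:ℝ)..F2 p q u, Real.sin (2 * am σ)) 0 t := by
        rw [hasDerivAt_iff_isLittleO]
        simp only [smul_zero, sub_zero]
        rw [Asymptotics.isLittleO_iff]
        intro ε hε
        have hev : ∀ᶠ u in 𝓝 t, |F2 p q u - F2 p q t| < ε/2 := by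
          have h1 : Tendsto (fun u => |F2 p q u - F2 p q t|) (𝓝 t) (𝓝 0) := by
            have h2 : Tendsto (fun u : ℝ => |F2 p q u - F2 p q t|) (𝓝 t)
                (𝓝 (|F2 p q t - F2 p q t|)) :=
              ((hF2cont.sub continuous_const).abs).continuousAt
            rw [sub_self, abs_zero] at h2
            exact h2
          exact h1.eventually_lt_const (by positivity)
        filter_upwards [hev] with u hu
        have hsub2 : (∫ σ in (0:ℝ)..F2 p q u, Real.sin (2 * am σ))
            - (∫ σ in (0:ℝ)..F2 p q t, Real.sin (2 * am σ))
            = ∫ σ in (F2 p q t)..(F2 p q u), Real.sin (2 * am σ) :=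
          intervalIntegral.integral_interval_sub_left
            (hgcont.intervalIntegrable 0 (F2 p q u)) (hgcont.intervalIntegrable 0 (F2 p q t))
        rw [Real.norm_eq_abs, Real.norm_eq_abs, hsub2]
        have ht' : t ∈ amDom p q := ht
        have hu' : u ∈ amDom p q := by rw [hSu]; trivial
        have hbound : ∀ σ ∈ Set.uIoc (F2 p q t) (F2 p q u), ‖Real.sin (2 * am σ)‖ ≤ 2 * |u - t| := by
          intro σ hσ
          have hamσ : |am σ - t| ≤ |u - t| := by
            rcases le_total (F2 p q t) (F2 p q u) with h|h
            · rw [Set.uIoc_of_le h] at hσ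
              have h2 : t ≤ am σ := by
                calc t = am (F2 p q t) := (ham.1 t ht').symm
                  _ ≤ am σ := hamMono.monotone hσ.1.le
              have h3 : am σ ≤ u := by
                calc am σ ≤ am (F2 p q u) := hamMono.monotone hσ.2
                  _ = u := ham.1 u hu'
              rw [abs_of_nonneg (by linarith), abs_of_nonneg (by linarith)]
              linarith
            · rw [Set.uIoc_comm, Set.uIoc_of_le h] at hσ
              have h2 : u ≤ am σ := by
                calc u = am (F2 p q u) := (ham.1 u hu').symm
                  _ ≤ am σ := hamMono.monotone hσ.1.le
              have h3 : am σ ≤ t := by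
                calc am σ ≤ am (F2 p q t) := hamMono.monotone hσ.2
                  _ = t := ham.1 t ht'
              rw [abs_of_nonpos (by linarith), abs_of_nonpos (by linarith)]
              linarith
          have h4 : |Real.cos (am σ)| ≤ |u - t| := by
            calc |Real.cos (am σ)| = |Real.cos (am σ) - Real.cos t| := by rw [hcos, sub_zero]
              _ ≤ |am σ - t| := aux_cos_lip _ _
              _ ≤ |u - t| := hamσ
          rw [Real.norm_eq_abs, Real.sin_two_mul, abs_mul, abs_mul, abs_two]
          have h5 := Real.abs_sin_le_one (am σ)
          have h6 := abs_nonneg (Real.cos (am σ))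
          have h7 := abs_nonneg (Real.sin (am σ))
          nlinarith
        have h8 := intervalIntegral.norm_integral_le_of_norm_le_const hbound
        rw [Real.norm_eq_abs] at h8
        calc |∫ σ in (F2 p q t)..(F2 p q u), Real.sin (2 * am σ)|
            ≤ 2 * |u - t| * |F2 p q u - F2 p q t| := h8
          _ ≤ 2 * |u - t| * (ε/2) := by
              apply mul_le_mul_of_nonneg_left hu.le (by positivity)
          _ = ε * |u - t| := by ring
      -- part 2 : derivative of the explicit term is 0
      have part2 : HasDerivAt (fun w => 1/q^2 * (p/(p-1))
          * (1 - (1 - q^2 * Real.sin w ^ 2) ^ (1/p * (p-1)))) 0 t := by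
        have hφ : HasDerivAt (fun w => (1 - q^2 * Real.sin w ^ 2) ^ (1/p * (p-1))) 0 t := by
          rw [hasDerivAt_iff_isLittleO]
          simp only [smul_zero, sub_zero, hb0, Real.zero_rpow (ne_of_gt he_pos)]
          rw [Asymptotics.isLittleO_iff]
          intro ε hε
          have h2e : 1 < 2 * (1/p * (p-1)) := by
            have h' : 2 * (1/p * (p-1)) = 2 - 2/p := by field_simp
            have h'' : 2/p < 1 := (div_lt_one hp0).2 (by linarith)
            rw [h']; linarith
          have htend : Tendsto (fun w => |w - t| ^ (2 * (1/p * (p-1)) - 1)) (𝓝 t) (𝓝 0) := by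
            have h1 : Tendsto (fun w : ℝ => |w - t|) (𝓝 t) (𝓝 0) := by
              have h2 : Tendsto (fun w : ℝ => |w - t|) (𝓝 t) (𝓝 (|t - t|)) :=
                ((continuous_id.sub continuous_const).abs).continuousAt
              rw [sub_self, abs_zero] at h2
              exact h2
            have h2 : ContinuousAt (fun s : ℝ => s ^ (2 * (1/p * (p-1)) - 1)) 0 :=
              Real.continuousAt_rpow_const 0 _ (Or.inr (by linarith))
            have h3 := h2.tendsto.comp h1
            have h4 : (0:ℝ) ^ (2 * (1/p * (p-1)) - 1) = 0 := Real.zero_rpow (by linarith)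
            rw [Function.comp_def, h4] at h3
            exact h3
          filter_upwards [htend.eventually_lt_const hε] with w hw
          rcases eq_or_ne w t with rfl|hne
          · rw [hb0, Real.zero_rpow (ne_of_gt he_pos)]
            simp
          · have h4 : |Real.cos w| ≤ |w - t| := by
              calc |Real.cos w| = |Real.cos w - Real.cos t| := by rw [hcos, sub_zero]
                _ ≤ |w - t| := aux_cos_lip _ _
            have hb_le : 1 - q^2 * Real.sin w ^ 2 ≤ (w - t)^2 := by
              have h5 : Real.cos w ^ 2 ≤ (w - t)^2 := by
                nlinarith [sq_abs (Real.cos w), sq_abs (w - t), abs_nonneg (Real.cos w),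
                  abs_nonneg (w - t)]
              have h6 : 1 - q^2 * Real.sin w ^ 2 = Real.cos w ^ 2 := by
                rw [hq1', one_pow, one_mul, ← Real.cos_sq']
              rw [h6]; exact h5
            have h6 : (1 - q^2 * Real.sin w ^ 2) ^ (1/p * (p-1))
                ≤ |w - t| ^ (2 * (1/p * (p-1))) := by
              calc (1 - q^2 * Real.sin w ^ 2) ^ (1/p * (p-1))
                  ≤ ((w - t)^2) ^ (1/p * (p-1)) :=
                    Real.rpow_le_rpow (aux_base_nonneg q hq0 hq1 w) hb_le he_pos.le
                _ = |w - t| ^ (2 * (1/p * (p-1))) := by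
                    rw [← sq_abs, ← Real.rpow_natCast |w - t| 2,
                      ← Real.rpow_mul (abs_nonneg _)]
                    norm_num
            have h7 : |w - t| ^ (2 * (1/p * (p-1)))
                = |w - t| ^ (2 * (1/p * (p-1)) - 1) * |w - t| := by
              rw [← Real.rpow_add_one (abs_ne_zero.2 (sub_ne_zero.2 hne))
                (2 * (1/p * (p-1)) - 1)]
              congr 1
              ring
            rw [Real.norm_eq_abs, Real.norm_eq_abs,
              abs_of_nonneg (Real.rpow_nonneg (aux_base_nonneg q hq0 hq1 w) _)]
            calc (1 - q^2 * Real.sin w ^ 2) ^ (1/p * (p-1))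
                ≤ |w - t| ^ (2 * (1/p * (p-1))) := h6
              _ = |w - t| ^ (2 * (1/p * (p-1)) - 1) * |w - t| := h7
              _ ≤ ε * |w - t| := mul_le_mul_of_nonneg_right hw.le (abs_nonneg _)
        have h9 := HasDerivAt.const_mul (1/q^2 * (p/(p-1))) (HasDerivAt.const_sub 1 hφ)
        simpa using h9
      have h10 := part1.sub part2
      rw [sub_self] at h10
      exact h10
    · -- good point : the base is positive
      have hb_pos : 0 < 1 - q^2 * Real.sin t ^ 2 :=
        lt_of_le_of_ne (aux_base_nonneg q hq0 hq1 t) (Ne.symm hb0)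
      have hint0 : IntervalIntegrable (fun θ => (1 - q^2 * Real.sin θ ^ 2) ^ (-(1/p))) volume 0 t :=
        hIntS 0 t hS0 ht
      have hF2d : HasDerivAt (F2 p q) ((1 - q^2 * Real.sin t ^ 2) ^ (-(1/p))) t := by
        show HasDerivAt (fun u => ∫ θ in (0:ℝ)..u, (1 - q^2 * Real.sin θ ^ 2) ^ (-(1/p))) _ t
        exact intervalIntegral.integral_hasDerivAt_right hint0
          ((aux_f_measurable p q).aestronglyMeasurable.stronglyMeasurableAtFilter)
          (aux_f_contAt p q t hb0)
      have hchain := (hLd (F2 p q t)).comp t hF2d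
      rw [ham.1 t ht] at hchain
      have hqne : q ≠ 0 := ne_of_gt hq0
      have hpne : p ≠ 0 := ne_of_gt hp0
      have hp1ne : p - 1 ≠ 0 := ne_of_gt hp1
      have hHd : HasDerivAt (fun w => 1/q^2 * (p/(p-1))
          * (1 - (1 - q^2 * Real.sin w ^ 2) ^ (1/p * (p-1))))
          (Real.sin (2 * t) * ((1 - q^2 * Real.sin t ^ 2) ^ (-(1/p)))) t := by
        have hsq : HasDerivAt (fun w => Real.sin w ^ 2) (2 * Real.sin t ^ 1 * Real.cos t) t := by
          exact ((Real.hasDerivAt_sin t).pow 2).congr_deriv (by norm_num)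
        have hb' : HasDerivAt (fun w => 1 - q^2 * Real.sin w ^ 2)
            (-(q^2 * (2 * Real.sin t ^ 1 * Real.cos t))) t :=
          HasDerivAt.const_sub 1 (HasDerivAt.const_mul (q^2) hsq)
        have hpow := hb'.rpow_const (p := 1/p * (p-1)) (Or.inl (ne_of_gt hb_pos))
        have hfin := HasDerivAt.const_mul (1/q^2 * (p/(p-1))) (HasDerivAt.const_sub 1 hpow)
        refine hfin.congr_deriv ?_
        have he1 : 1/p * (p-1) - 1 = -(1/p) := by field_simp; ring
        rw [he1, Real.sin_two_mul]
        field_simp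
      have h11 := hchain.sub hHd
      have h12 : Real.sin (2 * t) * (1 - q^2 * Real.sin t ^ 2) ^ (-(1/p))
          - Real.sin (2 * t) * (1 - q^2 * Real.sin t ^ 2) ^ (-(1/p)) = 0 := sub_self _
      rw [h12] at h11
      exact h11
  -- constancy of D on the domain
  have hDy : D y = D 0 := by
    rcases le_total 0 y with h0y|h0y
    · have hsub : Icc 0 y ⊆ amDom p q := hSord.out hS0 hy
      have hconst := constant_of_has_deriv_right_zero (f := D) (a := 0) (b := y)
        (fun u hu => ((hDd u (hsub hu)).continuousAt.continuousWithinAt))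
        (fun u hu => (hDd u (hsub (Ico_subset_Icc_self hu))).hasDerivWithinAt)
      exact hconst y (right_mem_Icc.2 h0y)
    · have hsub : Icc y 0 ⊆ amDom p q := hSord.out hy hS0
      have hconst := constant_of_has_deriv_right_zero (f := D) (a := y) (b := 0)
        (fun u hu => ((hDd u (hsub hu)).continuousAt.continuousWithinAt))
        (fun u hu => (hDd u (hsub (Ico_subset_Icc_self hu))).hasDerivWithinAt)
      exact (hconst 0 (right_mem_Icc.2 h0y)).symm
  have hD0 : D 0 = 0 := by
    rw [hD]
    have hF20 : F2 p q 0 = 0 := by rw [F2]; exact intervalIntegral.integral_same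
    simp [hF20, Real.one_rpow]
  have hDyval : D y = 0 := by rw [hDy, hD0]
  rw [hD] at hDyval
  simp only at hDyval
  linarith [hDyval]

/-- For `q ∈ (0,1]`, `∫₀^x sin(2·am_{2,p}(σ,q)) dσ = (1/q²)(p/(p-1))(1 - dn_p(x,q)^{p-1})`. -/
theorem orbitlike_sine_integral (p q : ℝ) (hp : 1 < p) (hq : q ∈ Set.Ioc (0:ℝ) 1)
    (am : ℝ → ℝ) (ham : IsInverseOn (F2 p q) am (amDom p q)) :
    ∀ x : ℝ,
      (∫ σ in (0:ℝ)..x, Real.sin (2 * am σ))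
        = (1/q^2) * (p/(p-1))
            * (1 - ((1 - q^2 * Real.sin (am x) ^ 2) ^ (1/p)) ^ (p-1)) := by
  intro x
  obtain ⟨hq0, hq1⟩ := hq
  have h1 := (ham.2 x).1
  have h2 := (ham.2 x).2
  have hkey := aux_key p q hp hq0 hq1 am ham (am x) h1
  rw [h2] at hkey
  rw [hkey, ← Real.rpow_mul (aux_base_nonneg q hq0 hq1 (am x))]
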